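/- Fix k = 3/4, α > 0, x ≥ 1, y ≥ 0. For p ∈ (0,1), let G_p be the geometric-type random variable with P(G_p > m) = (1−p)^{x₀ + x₁ + ⋯ + x_m}, where x₀ = ⌊x/p^{1/(2−k)}⌋ and x_i = ⌊x₀(1 + α(1−k)i/x₀^{1−k})^{1/(1−k)}⌋. Then as p → 0, P(p^{(1−k)/(2−k)} G_p ≥ y) converges to exp(−xy − 2α(1−k)x^k y² − 2α²(1−k)² x^{2k−1} y³ − α³(1−k)³ x^{3k−2} y⁴ − α⁴(1−k)⁴ x^{4k−3} y⁵ / 5). -/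

import Mathlib

open Real Filter Finset

noncomputable def Faux (a b v q : ℝ) : ℝ :=
  b^4*(v+q) + (a/2)*b^3*v*(v+q) + (a^2/16)*b^2*v*(v+q)*(2*v+q)
    + (a^3/64)*b*v^2*(v+q)^2 + (a^4/256)*(v*(v+q)*(2*v+q)*(3*v^2+3*v*q-q^2))/30

noncomputable def Tfun (α x y : ℝ) (p : ℝ) : ℝ :=
  ∑ i ∈ Finset.range (⌊y / p ^ ((1:ℝ)/5)⌋₊ + 1),
    ((⌊x / p ^ ((4:ℝ)/5)⌋₊:ℝ)
      * (1 + α * (1/4) * (i:ℝ) / ((⌊x / p ^ ((4:ℝ)/5)⌋₊:ℝ)) ^ ((1:ℝ)/4)) ^ (4:ℕ))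

noncomputable def Sfun (α x y : ℝ) (p : ℝ) : ℝ :=
  ∑ i ∈ Finset.range (⌊y / p ^ ((1:ℝ)/5)⌋₊ + 1),
    ((⌊(⌊x / p ^ ((4:ℝ)/5)⌋₊:ℝ)
      * (1 + α * (1/4) * (i:ℝ) / ((⌊x / p ^ ((4:ℝ)/5)⌋₊:ℝ)) ^ ((1:ℝ)/4)) ^ (4:ℕ)⌋₊ : ℝ))

lemma sum_one_add_mul_pow_four (s : ℝ) (n : ℕ) :
    ∑ i ∈ Finset.range n, (1 + s * i)^4 =
      n + 2*s*n*(n-1) + s^2*n*(n-1)*(2*n-1) + s^3*n^2*(n-1)^2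
        + s^4*n*(n-1)*(2*n-1)*(3*n^2-3*n-1)/30 := by
  induction n with
  | zero => norm_num
  | succ n ih => rw [Finset.sum_range_succ, ih]; push_cast; ring

lemma pT_eq (a B Q C pp : ℝ) (hB : 0 < B) (hC : C = B^4) (hp : pp = Q^5) (n : ℕ) :
    pp * ∑ i ∈ Finset.range (n+1), (C * (1 + a * (1/4) * (i:ℝ) / B)^4) =
      Faux a (Q*B) (Q*(n:ℝ)) Q := by
  subst hC hp
  have h1 : ∀ i:ℕ, B^4 * (1 + a*(1/4)*(i:ℝ)/B)^4 = B^4 * (1 + (a/(4*B))*(i:ℝ))^4 :=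
    fun i => by ring
  simp only [h1]
  rw [← Finset.mul_sum, sum_one_add_mul_pow_four]
  unfold Faux
  push_cast
  field_simp
  ring

lemma Faux_tendsto {l : Filter ℝ} {fb fv fq : ℝ → ℝ} {b v : ℝ} (a : ℝ)
    (hb : Tendsto fb l (nhds b)) (hv : Tendsto fv l (nhds v))
    (hq : Tendsto fq l (nhds 0)) :
    Tendsto (fun p => Faux a (fb p) (fv p) (fq p)) l (nhds (Faux a b v 0)) := by
  have hc : Continuous (fun t : ℝ × ℝ × ℝ => Faux a t.1 t.2.1 t.2.2) := by
    unfold Faux; fun_prop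
  have h3 : Tendsto (fun p => (fb p, fv p, fq p)) l (nhds (b, v, 0)) := by
    rw [nhds_prod_eq, nhds_prod_eq]
    exact hb.prodMk (hv.prodMk hq)
  have := (hc.tendsto (b, v, 0)).comp h3
  simpa [Function.comp_def] using this

lemma tendsto_log_one_sub_div : Tendsto (fun p : ℝ => Real.log (1 - p) / p)
    (nhdsWithin 0 (Set.Ioi 0)) (nhds (-1)) := by
  have hd1 : HasDerivAt (fun p : ℝ => 1 - p) (-1) 0 := by
    simpa using (hasDerivAt_id (0:ℝ)).const_sub 1
  have hd : HasDerivAt (fun p : ℝ => Real.log (1 - p)) (-1) 0 := by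
    have h := (Real.hasDerivAt_log (by norm_num : (1:ℝ) - 0 ≠ 0)).comp 0 hd1
    simpa [Function.comp_def] using h
  have h := hasDerivAt_iff_tendsto_slope.mp hd
  have hsub : Set.Ioi (0:ℝ) ⊆ {(0:ℝ)}ᶜ := fun z hz => Set.mem_compl_singleton_iff.mpr (ne_of_gt hz)
  have h2 := h.mono_left (nhdsWithin_mono 0 hsub)
  refine h2.congr' ?_
  filter_upwards [self_mem_nhdsWithin] with p hp
  simp [slope, Real.log_one, div_eq_inv_mul]

lemma tendsto_rpow_zero_right (e : ℝ) (he : 0 < e) :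
    Tendsto (fun p : ℝ => p ^ e) (nhdsWithin 0 (Set.Ioi 0)) (nhds 0) := by
  have h : ContinuousAt (fun p : ℝ => p ^ e) 0 :=
    Real.continuousAt_rpow_const 0 e (Or.inr he.le)
  have h2 : Tendsto (fun p : ℝ => p ^ e) (nhdsWithin 0 (Set.Ioi 0)) (nhds ((0:ℝ) ^ e)) :=
    h.tendsto.mono_left nhdsWithin_le_nhds
  rwa [Real.zero_rpow he.ne'] at h2

lemma tendsto_rpow_mul_floor (a e : ℝ) (ha : 0 ≤ a) (he : 0 < e) :
    Tendsto (fun p : ℝ => p ^ e * (⌊a / p ^ e⌋₊ : ℝ)) (nhdsWithin 0 (Set.Ioi 0)) (nhds a) := by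
  have h0 := tendsto_rpow_zero_right e he
  have hlow : Tendsto (fun p : ℝ => a - p ^ e) (nhdsWithin 0 (Set.Ioi 0)) (nhds a) := by
    simpa using (tendsto_const_nhds.sub h0)
  refine tendsto_of_tendsto_of_tendsto_of_le_of_le' hlow tendsto_const_nhds ?_ ?_
  · filter_upwards [self_mem_nhdsWithin] with p hp
    have hpe : 0 < p ^ e := Real.rpow_pos_of_pos hp e
    have h1 := Nat.sub_one_lt_floor (a / p ^ e)
    have h2 : p ^ e * (a / p ^ e) = a := by field_simp
    nlinarith [mul_lt_mul_of_pos_left h1 hpe]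
  · filter_upwards [self_mem_nhdsWithin] with p hp
    have hpe : 0 < p ^ e := Real.rpow_pos_of_pos hp e
    have h1 : (⌊a / p ^ e⌋₊ : ℝ) ≤ a / p ^ e := Nat.floor_le (by positivity)
    calc p ^ e * (⌊a / p ^ e⌋₊ : ℝ) ≤ p ^ e * (a / p ^ e) :=
          mul_le_mul_of_nonneg_left h1 hpe.le
      _ = a := by field_simp

lemma hpT_lemma (α x y : ℝ) (hx : 1 ≤ x) (hy : 0 ≤ y) :
    Tendsto (fun p => p * Tfun α x y p) (nhdsWithin 0 (Set.Ioi 0))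
      (nhds (Faux α (x^((1:ℝ)/4)) y 0)) := by
  have hx0 : (0:ℝ) < x := lt_of_lt_of_le one_pos hx
  have hIoo : Set.Ioo (0:ℝ) 1 ∈ nhdsWithin (0:ℝ) (Set.Ioi 0) :=
    Ioo_mem_nhdsGT_of_mem (by constructor <;> norm_num)
  have hq0 := tendsto_rpow_zero_right ((1:ℝ)/5) (by norm_num)
  have hv := tendsto_rpow_mul_floor y ((1:ℝ)/5) hy (by norm_num)
  have hu := tendsto_rpow_mul_floor x ((4:ℝ)/5) hx0.le (by norm_num)
  have hβ : Tendsto (fun p : ℝ => p ^ ((1:ℝ)/5) * ((⌊x / p ^ ((4:ℝ)/5)⌋₊:ℝ)) ^ ((1:ℝ)/4))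
      (nhdsWithin 0 (Set.Ioi 0)) (nhds (x ^ ((1:ℝ)/4))) := by
    have hcont : ContinuousAt (fun t : ℝ => t ^ ((1:ℝ)/4)) x :=
      Real.continuousAt_rpow_const x _ (Or.inl hx0.ne')
    refine Tendsto.congr' ?_ (hcont.tendsto.comp hu)
    filter_upwards [self_mem_nhdsWithin] with p (hp : p ∈ Set.Ioi 0)
    have hp0 : (0:ℝ) < p := hp
    show (p ^ ((4:ℝ)/5) * (⌊x / p ^ ((4:ℝ)/5)⌋₊:ℝ)) ^ ((1:ℝ)/4) = _
    rw [Real.mul_rpow (by positivity) (by positivity), ← Real.rpow_mul hp0.le]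
    norm_num
  have hFt := Faux_tendsto α hβ hv hq0
  refine Tendsto.congr' ?_ hFt
  filter_upwards [hIoo] with p hp
  have hp0 : (0:ℝ) < p := hp.1
  have hpe : (0:ℝ) < p ^ ((4:ℝ)/5) := Real.rpow_pos_of_pos hp0 _
  have hC1 : (1:ℝ) ≤ (⌊x / p ^ ((4:ℝ)/5)⌋₊:ℝ) := by
    have hle1 : p ^ ((4:ℝ)/5) ≤ 1 := Real.rpow_le_one hp0.le hp.2.le (by norm_num)
    have h1 : (1:ℝ) ≤ x / p ^ ((4:ℝ)/5) := by rw [le_div_iff₀ hpe]; nlinarith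
    exact_mod_cast Nat.le_floor (by exact_mod_cast h1 : ((1:ℕ):ℝ) ≤ x / p ^ ((4:ℝ)/5))
  have hB : (0:ℝ) < ((⌊x / p ^ ((4:ℝ)/5)⌋₊:ℝ)) ^ ((1:ℝ)/4) :=
    Real.rpow_pos_of_pos (by linarith) _
  have hCeq : (⌊x / p ^ ((4:ℝ)/5)⌋₊:ℝ) = (((⌊x / p ^ ((4:ℝ)/5)⌋₊:ℝ)) ^ ((1:ℝ)/4))^(4:ℕ) := by
    rw [← Real.rpow_natCast (((⌊x / p ^ ((4:ℝ)/5)⌋₊:ℝ)) ^ ((1:ℝ)/4)) 4,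
      ← Real.rpow_mul (by linarith : (0:ℝ) ≤ (⌊x / p ^ ((4:ℝ)/5)⌋₊:ℝ))]
    norm_num
  have hpeq : p = (p ^ ((1:ℝ)/5))^(5:ℕ) := by
    rw [← Real.rpow_natCast (p ^ ((1:ℝ)/5)) 5, ← Real.rpow_mul hp0.le]; norm_num
  exact (pT_eq α (((⌊x / p ^ ((4:ℝ)/5)⌋₊:ℝ)) ^ ((1:ℝ)/4)) (p ^ ((1:ℝ)/5))
    ((⌊x / p ^ ((4:ℝ)/5)⌋₊:ℝ)) p hB hCeq hpeq (⌊y / p ^ ((1:ℝ)/5)⌋₊)).symm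

lemma hpS_lemma (α x y : ℝ) (hx : 1 ≤ x) (hy : 0 ≤ y) :
    Tendsto (fun p => p * Sfun α x y p) (nhdsWithin 0 (Set.Ioi 0))
      (nhds (Faux α (x^((1:ℝ)/4)) y 0)) := by
  have hIoo : Set.Ioo (0:ℝ) 1 ∈ nhdsWithin (0:ℝ) (Set.Ioi 0) :=
    Ioo_mem_nhdsGT_of_mem (by constructor <;> norm_num)
  have hpT := hpT_lemma α x y hx hy
  have hq0 := tendsto_rpow_zero_right ((1:ℝ)/5) (by norm_num)
  have hv := tendsto_rpow_mul_floor y ((1:ℝ)/5) hy (by norm_num)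
  have hm0 : Tendsto (fun p : ℝ => p * ((⌊y / p ^ ((1:ℝ)/5)⌋₊:ℝ) + 1))
      (nhdsWithin 0 (Set.Ioi 0)) (nhds 0) := by
    have h := (hq0.pow 4).mul (hv.add hq0)
    have h2 : Tendsto (fun p : ℝ => (p ^ ((1:ℝ)/5))^4 *
        (p ^ ((1:ℝ)/5) * (⌊y / p ^ ((1:ℝ)/5)⌋₊:ℝ) + p ^ ((1:ℝ)/5)))
        (nhdsWithin 0 (Set.Ioi 0)) (nhds 0) := by
      convert h using 2
      norm_num
    refine Tendsto.congr' ?_ h2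
    filter_upwards [self_mem_nhdsWithin] with p (hp : p ∈ Set.Ioi 0)
    have hp0 : (0:ℝ) < p := hp
    have hpeq : p = (p ^ ((1:ℝ)/5))^(5:ℕ) := by
      rw [← Real.rpow_natCast (p ^ ((1:ℝ)/5)) 5, ← Real.rpow_mul hp0.le]; norm_num
    have : (p ^ ((1:ℝ)/5))^(4:ℕ) * (p ^ ((1:ℝ)/5) * (⌊y / p ^ ((1:ℝ)/5)⌋₊:ℝ) + p ^ ((1:ℝ)/5))
        = (p ^ ((1:ℝ)/5))^(5:ℕ) * ((⌊y / p ^ ((1:ℝ)/5)⌋₊:ℝ) + 1) := by ring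
    rw [this, ← hpeq]
  have hlow : Tendsto (fun p : ℝ => p * Tfun α x y p - p * ((⌊y / p ^ ((1:ℝ)/5)⌋₊:ℝ) + 1))
      (nhdsWithin 0 (Set.Ioi 0)) (nhds (Faux α (x^((1:ℝ)/4)) y 0)) := by
    simpa using hpT.sub hm0
  refine tendsto_of_tendsto_of_tendsto_of_le_of_le' hlow hpT ?_ ?_
  · filter_upwards [hIoo] with p hp
    have hp0 : (0:ℝ) < p := hp.1
    have key : Tfun α x y p - ((⌊y / p ^ ((1:ℝ)/5)⌋₊:ℝ) + 1) ≤ Sfun α x y p := by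
      unfold Tfun Sfun
      set M := ⌊y / p ^ ((1:ℝ)/5)⌋₊ with hM
      have h2 : ∑ i ∈ Finset.range (M+1),
          (((⌊x / p ^ ((4:ℝ)/5)⌋₊:ℝ)
            * (1 + α * (1/4) * (i:ℝ) / ((⌊x / p ^ ((4:ℝ)/5)⌋₊:ℝ)) ^ ((1:ℝ)/4)) ^ (4:ℕ))
          - (⌊(⌊x / p ^ ((4:ℝ)/5)⌋₊:ℝ)
            * (1 + α * (1/4) * (i:ℝ) / ((⌊x / p ^ ((4:ℝ)/5)⌋₊:ℝ)) ^ ((1:ℝ)/4)) ^ (4:ℕ)⌋₊ : ℝ))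
          ≤ ∑ _i ∈ Finset.range (M+1), (1:ℝ) := by
        refine Finset.sum_le_sum fun i _ => ?_
        have := Nat.sub_one_lt_floor ((⌊x / p ^ ((4:ℝ)/5)⌋₊:ℝ)
            * (1 + α * (1/4) * (i:ℝ) / ((⌊x / p ^ ((4:ℝ)/5)⌋₊:ℝ)) ^ ((1:ℝ)/4)) ^ (4:ℕ))
        linarith
      rw [Finset.sum_sub_distrib] at h2
      simp only [Finset.sum_const, Finset.card_range, nsmul_eq_mul, mul_one] at h2
      push_cast at h2
      linarith
    have h3 := mul_le_mul_of_nonneg_left key hp0.le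
    rw [mul_sub] at h3
    linarith
  · filter_upwards [hIoo] with p hp
    have hp0 : (0:ℝ) < p := hp.1
    refine mul_le_mul_of_nonneg_left ?_ hp0.le
    unfold Tfun Sfun
    refine Finset.sum_le_sum fun i _ => Nat.floor_le (by positivity)

lemma Faux_value (α x y : ℝ) (hx : 0 < x) :
    -(x * y) - 2*α*(1/4)*x^((3:ℝ)/4)*y^2 - 2*α^2*(1/16)*x^((1:ℝ)/2)*y^3
      - α^3*(1/64)*x^((1:ℝ)/4)*y^4 - α^4*(1/256)*y^5/5
      = -(Faux α (x^((1:ℝ)/4)) y 0) := by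
  unfold Faux
  have e4 : (x^((1:ℝ)/4))^(4:ℕ) = x := by
    rw [← Real.rpow_natCast (x^((1:ℝ)/4)) 4, ← Real.rpow_mul hx.le]; norm_num
  have e3 : (x^((1:ℝ)/4))^(3:ℕ) = x^((3:ℝ)/4) := by
    rw [← Real.rpow_natCast (x^((1:ℝ)/4)) 3, ← Real.rpow_mul hx.le]; norm_num
  have e2 : (x^((1:ℝ)/4))^(2:ℕ) = x^((1:ℝ)/2) := by
    rw [← Real.rpow_natCast (x^((1:ℝ)/4)) 2, ← Real.rpow_mul hx.le]; norm_num
  rw [e4, e3, e2]; ring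

/-- Limit of the scaled time-to-first-loss distribution for TCP Compound
(k = 3/4): P(p^{(1-k)/(2-k)} G_p ≥ y) → exp(-xy - 2α(1-k)x^k y² - ...). -/
theorem tcp_compound_scaled_loss_time_limit
    (α x y k : ℝ) (hk : k = 3 / 4) (hα : 0 < α) (hx : 1 ≤ x) (hy : 0 ≤ y) :
    Tendsto (fun p : ℝ =>
        (1 - p) ^ (∑ i ∈ Finset.range (⌊y / p ^ ((1 - k) / (2 - k))⌋₊ + 1),
          (⌊((⌊x / p ^ (1 / (2 - k))⌋₊ : ℝ)
              * (1 + α * (1 - k) * (i : ℝ) / (⌊x / p ^ (1 / (2 - k))⌋₊ : ℝ) ^ (1 - k))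
                ^ (1 / (1 - k)))⌋₊ : ℝ)))
      (nhdsWithin 0 (Set.Ioi 0))
      (nhds (Real.exp (-(x * y) - 2 * α * (1 - k) * x ^ k * y ^ 2
        - 2 * α ^ 2 * (1 - k) ^ 2 * x ^ (2 * k - 1) * y ^ 3
        - α ^ 3 * (1 - k) ^ 3 * x ^ (3 * k - 2) * y ^ 4
        - α ^ 4 * (1 - k) ^ 4 * x ^ (4 * k - 3) * y ^ 5 / 5))) := by
  subst hk
  have hx0 : (0:ℝ) < x := lt_of_lt_of_le one_pos hx
  norm_num
  have h4 : ∀ t : ℝ, t ^ (4:ℝ) = t ^ (4:ℕ) := fun t => by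
    rw [show (4:ℝ) = ((4:ℕ):ℝ) by norm_num, Real.rpow_natCast]
  rw [show (-(x * y) - 2*α*(1/4)*x^((3:ℝ)/4)*y^2 - 2*α^2*(1/16)*x^((1:ℝ)/2)*y^3
      - α^3*(1/64)*x^((1:ℝ)/4)*y^4 - α^4*(1/256)*y^5/5)
      = -(Faux α (x^((1:ℝ)/4)) y 0) from Faux_value α x y hx0]
  have hpS := hpS_lemma α x y hx hy
  have hmul : Tendsto (fun p : ℝ => Real.log (1-p) * Sfun α x y p)
      (nhdsWithin 0 (Set.Ioi 0)) (nhds (-(Faux α (x^((1:ℝ)/4)) y 0))) := by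
    have h := hpS.mul tendsto_log_one_sub_div
    have h2 : Tendsto (fun p : ℝ => (p * Sfun α x y p) * (Real.log (1-p) / p))
        (nhdsWithin 0 (Set.Ioi 0)) (nhds (-(Faux α (x^((1:ℝ)/4)) y 0))) := by
      convert h using 2
      ring
    refine Tendsto.congr' ?_ h2
    filter_upwards [self_mem_nhdsWithin] with p (hp : p ∈ Set.Ioi 0)
    have hp0 : (0:ℝ) < p := hp
    field_simp
  have hexp := (Real.continuous_exp.tendsto _).comp hmul
  refine Tendsto.congr' ?_ hexp
  have hIoo : Set.Ioo (0:ℝ) 1 ∈ nhdsWithin (0:ℝ) (Set.Ioi 0) :=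
    Ioo_mem_nhdsGT_of_mem (by constructor <;> norm_num)
  filter_upwards [hIoo] with p hp
  show Real.exp (Real.log (1-p) * Sfun α x y p) = _
  rw [Real.rpow_def_of_pos (by linarith [hp.2] : (0:ℝ) < 1 - p)]
  rfl
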